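/- Fix integers r = 2q+2 with q ≥ 1, and reals s₁ > s₂ > ⋯ > s_q ≥ 10^6. Define t₀ = 1 and t_i = s_i t_{i−1}, and let H be the r-uniform hypergraph on [N] (with N > s₁) in which an increasing r-tuple (x₀,…,x_q,y_q,…,y₀) is an edge iff Σ_{i=0}^q (−1)^i t_i (y_i − x_i) > 0. Then the independence number of H satisfies α(H) ≤ 10·(s_q + 2 + Σ_{i=1}^{⌊q/2⌋} (log s_{2i−1})/(log s_{2i})). -/

import Mathlib

open Finset

namespace IndepBound

/-- shifted weight products: `w s k i = s (k+1) * s (k+2) * ⋯ * s (k+i)` -/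
def w (s : ℕ → ℝ) (k i : ℕ) : ℝ := ∏ j ∈ Finset.range i, s (k + 1 + j)

lemma w_zero (s : ℕ → ℝ) (k : ℕ) : w s k 0 = 1 := by simp [w]

lemma w_one (s : ℕ → ℝ) (k : ℕ) : w s k 1 = s (k+1) := by simp [w]

lemma w_succ (s : ℕ → ℝ) (k i : ℕ) : w s k (i+1) = s (k+1) * w s (k+1) i := by
  unfold w
  rw [Finset.prod_range_succ', mul_comm]
  simp only [Nat.add_zero]
  congr 1
  exact Finset.prod_congr rfl (fun j _ => by congr 1; omega)

lemma w_Icc (s : ℕ → ℝ) (i : ℕ) : (∏ j ∈ Finset.Icc 1 i, s j) = w s 0 i := by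
  induction i with
  | zero => simp [w]
  | succ i ih =>
      rw [Finset.prod_Icc_succ_top (by omega), ih]
      unfold w
      rw [Finset.prod_range_succ]
      congr 2
      omega

/-- the alternating chain sum at level `k`, depth `p` -/
def S (s : ℕ → ℝ) (k p : ℕ) (c a b : ℕ → ℕ) : ℝ :=
  ∑ i ∈ Finset.range (p+1), (-1:ℝ)^i * w s k i * ((c (b i) : ℝ) - (c (a i) : ℝ))

/-- an index chain: `a 0 < a 1 < ⋯ < a p < b p < ⋯ < b 0 < n` -/
def Chain (n p : ℕ) (a b : ℕ → ℕ) : Prop :=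
  (∀ i, i < p → a i < a (i+1)) ∧ a p < b p ∧ (∀ i, i < p → b (i+1) < b i) ∧ b 0 < n

/-- the bound function -/
noncomputable def g (s : ℕ → ℝ) (p k : ℕ) : ℝ :=
  (∑ i ∈ Finset.range (p/2),
    (2 * Real.log (2 * s (k + 2*i)) / Real.log (s (k + 2*i + 1)/2) + 6))
  + (if p % 2 = 0 then 2 * s (k+p) + 1
     else 2 * Real.log (2 * s (k+p-1)) / Real.log (s (k+p)) + 5)

lemma g_rec (s : ℕ → ℝ) (p k : ℕ) :
    g s (p+2) k = (2 * Real.log (2 * s k) / Real.log (s (k + 1)/2) + 6) + g s p (k+2) := by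
  unfold g
  have h1 : (p+2)/2 = p/2 + 1 := by omega
  have h2 : (p+2) % 2 = p % 2 := by omega
  have h4 : k + (p+2) = (k+2) + p := by omega
  have h5 : k + (p+2) - 1 = (k+2) + p - 1 := by omega
  rw [h4, h1, h2, Finset.sum_range_succ']
  have hsum : (∑ i ∈ Finset.range (p/2),
      (2 * Real.log (2 * s (k + 2*(i+1))) / Real.log (s (k + 2*(i+1) + 1)/2) + 6))
      = ∑ i ∈ Finset.range (p/2),
      (2 * Real.log (2 * s ((k+2) + 2*i)) / Real.log (s ((k+2) + 2*i + 1)/2) + 6) := by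
    refine Finset.sum_congr rfl fun i _ => ?_
    rw [show k + 2*(i+1) = (k+2)+2*i from by omega]
  rw [hsum]
  simp only [Nat.mul_zero, Nat.add_zero]
  ring

lemma mono_of_step {f : ℕ → ℕ} {p : ℕ} (h : ∀ i, i < p → f i < f (i+1)) :
    ∀ j, j ≤ p → ∀ i, i ≤ j → f i ≤ f j := by
  intro j
  induction j with
  | zero => intro _ i hi; have h0 : i = 0 := by omega
            rw [h0]
  | succ j ih =>
      intro hj i hi
      rcases Nat.lt_or_ge i (j+1) with h'|h'
      · exact le_trans (ih (by omega) i (by omega)) (le_of_lt (h j (by omega)))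
      · have : i = j + 1 := by omega
        subst this; exact le_rfl

lemma anti_of_step {f : ℕ → ℕ} {p : ℕ} (h : ∀ i, i < p → f (i+1) < f i) :
    ∀ j, j ≤ p → ∀ i, i ≤ j → f j ≤ f i := by
  intro j
  induction j with
  | zero => intro _ i hi; have h0 : i = 0 := by omega
            rw [h0]
  | succ j ih =>
      intro hj i hi
      rcases Nat.lt_or_ge i (j+1) with h'|h'
      · exact le_trans (le_of_lt (h j (by omega))) (ih (by omega) i (by omega))
      · have : i = j + 1 := by omega
        subst this; exact le_rfl


lemma log_ge_twelve {x : ℝ} (hx : (10:ℝ)^6 ≤ x) : 12 ≤ Real.log x := by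
  have h0 : ((2:ℝ))^18 ≤ (10:ℝ)^6 := by norm_num
  have h2 : ((2:ℝ))^18 ≤ x := le_trans h0 hx
  have h3 := Real.log_le_log (by positivity) h2
  rw [Real.log_pow] at h3
  have hl2 : (0.6931471803:ℝ) < Real.log 2 := Real.log_two_gt_d9
  norm_num at h3
  nlinarith

lemma log2_lt : Real.log 2 < 0.7 := lt_trans Real.log_two_lt_d9 (by norm_num)

lemma log2_pos : (0:ℝ) < Real.log 2 := Real.log_pos (by norm_num)

lemma smono_of_step {f : ℕ → ℕ} {p : ℕ} (h : ∀ i, i < p → f i < f (i+1)) :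
    ∀ i j, i < j → j ≤ p → f i < f j := by
  intro i j hij hj
  obtain ⟨j', rfl⟩ : ∃ j', j = j' + 1 := ⟨j - 1, by omega⟩
  exact lt_of_le_of_lt (mono_of_step h j' (by omega) i (by omega)) (h j' (by omega))

lemma santi_of_step {f : ℕ → ℕ} {p : ℕ} (h : ∀ i, i < p → f (i+1) < f i) :
    ∀ i j, i < j → j ≤ p → f j < f i := by
  intro i j hij hj
  obtain ⟨j', rfl⟩ : ∃ j', j = j' + 1 := ⟨j - 1, by omega⟩
  exact lt_of_lt_of_le (h j' (by omega)) (anti_of_step h j' (by omega) i (by omega))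

def peelA (a : ℕ → ℕ) : ℕ → ℕ
  | 0 => 0
  | (i+1) => a i + 1

def peelB (n : ℕ) (b : ℕ → ℕ) : ℕ → ℕ
  | 0 => n - 1
  | (i+1) => b i + 1

lemma peel_sum (s : ℕ → ℝ) (qm n : ℕ) (c a b : ℕ → ℕ) :
    S s 0 (qm+1) c (peelA a) (peelB n b)
      = ((c (n-1):ℝ) - c 0) - s 1 * S s 1 qm (fun i => c (i+1)) a b := by
  unfold S
  rw [Finset.sum_range_succ']
  have e : ∀ i, (-1:ℝ)^(i+1) * w s 0 (i+1) * ((c (peelB n b (i+1)):ℝ) - c (peelA a (i+1)))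
      = (-(s 1)) * ((-1:ℝ)^i * w s 1 i * ((c (b i + 1):ℝ) - c (a i + 1))) := by
    intro i
    have hA : peelA a (i+1) = a i + 1 := rfl
    have hB : peelB n b (i+1) = b i + 1 := rfl
    rw [hA, hB, w_succ, pow_succ]
    ring
  rw [Finset.sum_congr rfl (fun i _ => e i), ← Finset.mul_sum]
  have hA0 : peelA a 0 = 0 := rfl
  have hB0 : peelB n b 0 = n - 1 := rfl
  rw [hA0, hB0, w_zero]
  ring

lemma sum_shift (f : ℕ → ℝ) : ∀ m, ∑ i ∈ Finset.range m, f (i+1) = ∑ i ∈ Finset.Icc 1 m, f i := by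
  intro m
  induction m with
  | zero => simp
  | succ m ih => rw [Finset.sum_range_succ, ih, Finset.sum_Icc_succ_top (by omega)]

def compA (J : ℕ) (a : ℕ → ℕ) : ℕ → ℕ
  | 0 => J
  | 1 => J + 1
  | (i+2) => a i + (J + 2)

def compB (J n : ℕ) (b : ℕ → ℕ) : ℕ → ℕ
  | 0 => n - 1 - J
  | 1 => n - 2 - J
  | (i+2) => b i + (J + 2)

lemma sum_peel2 (p : ℕ) (f : ℕ → ℝ) :
    ∑ i ∈ Finset.range ((p+2)+1), f i
      = (∑ i ∈ Finset.range (p+1), f (i+2)) + f 1 + f 0 := by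
  rw [Finset.sum_range_succ' f (p+2), Finset.sum_range_succ' (fun i => f (i+1)) (p+1)]

lemma comp_sum (s : ℕ → ℝ) (k p J n : ℕ) (c a b : ℕ → ℕ) :
    S s k (p+2) c (compA J a) (compB J n b)
      = (((c (n-1-J) : ℝ) - c J) - s (k+1) * ((c (n-2-J) : ℝ) - c (J+1)))
        + s (k+1) * s (k+2) * S s (k+2) p (fun i => c (i + (J+2))) a b := by
  unfold S
  rw [sum_peel2]
  have e2 : ∀ i, (-1:ℝ)^(i+2) * w s k (i+2) * ((c (compB J n b (i+2)):ℝ) - c (compA J a (i+2)))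
      = s (k+1) * s (k+2) * ((-1:ℝ)^i * w s (k+2) i * ((c (b i + (J+2)):ℝ) - c (a i + (J+2)))) := by
    intro i
    have hA : compA J a (i+2) = a i + (J+2) := rfl
    have hB : compB J n b (i+2) = b i + (J+2) := rfl
    rw [hA, hB, w_succ, w_succ, pow_add]
    norm_num
    ring
  rw [Finset.sum_congr rfl (fun i _ => e2 i), ← Finset.mul_sum]
  have hA0 : compA J a 0 = J := rfl
  have hB0 : compB J n b 0 = n-1-J := rfl
  have hA1 : compA J a 1 = J+1 := rfl
  have hB1 : compB J n b 1 = n-2-J := rfl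
  rw [hA0, hB0, hA1, hB1, w_zero, w_one]
  ring


section Ctx

variable {q : ℕ} {s : ℕ → ℝ}
  (hsl : ∀ j, 1 ≤ j → j ≤ q → (10:ℝ)^6 ≤ s j)

include hsl

lemma s_pos {j : ℕ} (h1 : 1 ≤ j) (h2 : j ≤ q) : (0:ℝ) < s j :=
  lt_of_lt_of_le (by norm_num) (hsl j h1 h2)

lemma s_big {j : ℕ} (h1 : 1 ≤ j) (h2 : j ≤ q) : (2:ℝ) < s j :=
  lt_of_lt_of_le (by norm_num) (hsl j h1 h2)

lemma g_ge_one : ∀ p k, 1 ≤ k → k + p = q → 1 ≤ g s p k := by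
  intro p k hk hkp
  unfold g
  have hterm : (1:ℝ) ≤ (if p % 2 = 0 then 2 * s (k+p) + 1
      else 2 * Real.log (2 * s (k+p-1)) / Real.log (s (k+p)) + 5) := by
    split_ifs with hpar
    · have h1 : (0:ℝ) < s (k+p) := s_pos hsl (by omega) (by omega)
      linarith
    · have hp1 : 1 ≤ p := by omega
      have h1 : (0:ℝ) ≤ Real.log (2 * s (k+p-1)) := by
        apply Real.log_nonneg
        have := hsl (k+p-1) (by omega) (by omega)
        have h10 : (1:ℝ) ≤ 10^6 := by norm_num
        linarith
      have h2 : (0:ℝ) < Real.log (s (k+p)) := by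
        apply Real.log_pos
        have := s_big hsl (j := k+p) (by omega) (by omega)
        linarith
      have := div_nonneg (by linarith : (0:ℝ) ≤ 2 * Real.log (2 * s (k+p-1))) h2.le
      linarith
  have hsum : (0:ℝ) ≤ ∑ i ∈ Finset.range (p/2),
      (2 * Real.log (2 * s (k + 2*i)) / Real.log (s (k + 2*i + 1)/2) + 6) := by
    apply Finset.sum_nonneg
    intro i hi
    have hi' : i < p/2 := Finset.mem_range.mp hi
    have hidx : k + 2*i + 1 ≤ q := by omega
    have h1 : (0:ℝ) ≤ Real.log (2 * s (k + 2*i)) := by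
      apply Real.log_nonneg
      have := hsl (k+2*i) (by omega) (by omega)
      have h10 : (1:ℝ) ≤ 10^6 := by norm_num
      linarith
    have h2 : (0:ℝ) < Real.log (s (k + 2*i + 1)/2) := by
      apply Real.log_pos
      have := s_big hsl (j := k+2*i+1) (by omega) (by omega)
      linarith
    have := div_nonneg (by linarith : (0:ℝ) ≤ 2 * Real.log (2 * s (k + 2*i))) h2.le
    linarith
  linarith

lemma phase_bound {a : ℕ} (h1 : 1 ≤ a) (h2 : a + 1 ≤ q) (hlt : s (a+1) < s a) :
    2 * Real.log (2 * s a) / Real.log (s (a+1)/2) + 6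
      ≤ 10 * (Real.log (s a) / Real.log (s (a+1))) := by
  have hpa : (0:ℝ) < s a := s_pos hsl h1 (by omega)
  have hpa1 : (0:ℝ) < s (a+1) := s_pos hsl (by omega) h2
  set A := Real.log (s a) with hA
  set L := Real.log (s (a+1)) with hL
  have hAL : L ≤ A := Real.log_le_log hpa1 hlt.le
  have hL12 : 12 ≤ L := log_ge_twelve (hsl (a+1) (by omega) h2)
  have hA0 : (0:ℝ) ≤ A := by linarith
  have hl2 : Real.log 2 < 0.7 := log2_lt
  have hl2p : (0:ℝ) < Real.log 2 := log2_pos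
  rw [Real.log_mul two_ne_zero (ne_of_gt hpa), Real.log_div (ne_of_gt hpa1) two_ne_zero]
  simp only [← hA, ← hL]
  have hd1 : (0:ℝ) < L - Real.log 2 := by linarith
  have hd2 : (0:ℝ) < L := by linarith
  have expand : 2 * (Real.log 2 + A) / (L - Real.log 2) + 6
      = (2 * (Real.log 2 + A) + 6 * (L - Real.log 2)) / (L - Real.log 2) := by
    field_simp
  rw [expand, mul_div_assoc' 10 A L, div_le_div_iff₀ hd1 hd2]
  nlinarith [mul_le_mul_of_nonneg_right hAL hd2.le,
    mul_le_mul_of_nonneg_left hL12 hA0,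
    mul_nonneg hl2p.le hd2.le, mul_nonneg hA0 hd2.le]

lemma term_bound {a : ℕ} (h1 : 1 ≤ a) (h2 : a + 1 ≤ q) (hlt : s (a+1) < s a) :
    2 * Real.log (2 * s a) / Real.log (s (a+1)) + 5
      ≤ 10 * (Real.log (s a) / Real.log (s (a+1))) := by
  have hpa : (0:ℝ) < s a := s_pos hsl h1 (by omega)
  have hpa1 : (0:ℝ) < s (a+1) := s_pos hsl (by omega) h2
  set A := Real.log (s a) with hA
  set L := Real.log (s (a+1)) with hL
  have hAL : L ≤ A := Real.log_le_log hpa1 hlt.le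
  have hL12 : 12 ≤ L := log_ge_twelve (hsl (a+1) (by omega) h2)
  have hA0 : (0:ℝ) ≤ A := by linarith
  have hl2 : Real.log 2 < 0.7 := log2_lt
  have hl2p : (0:ℝ) < Real.log 2 := log2_pos
  rw [Real.log_mul two_ne_zero (ne_of_gt hpa)]
  simp only [← hA, ← hL]
  have hd2 : (0:ℝ) < L := by linarith
  have expand : 2 * (Real.log 2 + A) / L + 5 = (2 * (Real.log 2 + A) + 5 * L) / L := by
    field_simp
  rw [expand, mul_div_assoc' 10 A L, div_le_div_iff₀ hd2 hd2]
  nlinarith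


end Ctx

def Rf (c : ℕ → ℕ) (n : ℕ) (j : ℕ) : ℝ := (c (n-1-j) : ℝ) - c j

set_option maxHeartbeats 1000000

lemma claim {q : ℕ} {s : ℕ → ℝ} (hsl : ∀ j, 1 ≤ j → j ≤ q → (10:ℝ)^6 ≤ s j) :
    ∀ p k, 1 ≤ k → k + p = q → ∀ (n : ℕ) (c : ℕ → ℕ),
      (∀ i j, i < j → j < n → c i < c j) → ∀ δ : ℝ, 0 < δ →
      (∀ a b, Chain n p a b → δ ≤ S s k p c a b) →
      ((c (n-1) : ℝ) - (c 0 : ℝ)) ≤ 2 * s k * δ →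
      (n : ℝ) ≤ g s p k := by
  intro p
  induction p using Nat.strong_induction_on with
  | _ p IH =>
  obtain _|(_|p) := p
  -- ================= case p = 0 =================
  · intro k hk hkp n c hc δ hδ hyp hspan
    have hg : g s 0 k = 2 * s k + 1 := by simp [g]
    rw [hg]
    have hskpos : (0:ℝ) < s k := s_pos hsl (by omega) (by omega)
    rcases Nat.eq_zero_or_pos n with rfl|hn
    · push_cast; linarith
    · have key : ∀ m, m < n → (m:ℝ) * δ ≤ (c m : ℝ) - c 0 := by
        intro m
        induction m with
        | zero => intro _; simp
        | succ m ih =>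
            intro hm
            have h1 := ih (by omega)
            have hch : Chain n 0 (fun _ => m) (fun _ => m+1) :=
              ⟨fun i hi => absurd hi (by omega), Nat.lt_succ_self m,
               fun i hi => absurd hi (by omega), hm⟩
            have h2 := hyp _ _ hch
            have h3 : S s k 0 c (fun _ => m) (fun _ => m+1) = (c (m+1):ℝ) - c m := by
              simp [S, w_zero]
            rw [h3] at h2
            push_cast
            push_cast at h1
            linarith
      have h4 := key (n-1) (by omega)
      have h5 : ((n-1:ℕ):ℝ) = (n:ℝ) - 1 := by
        rw [Nat.cast_sub hn]; simp
      rw [h5] at h4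
      have h6 : ((n:ℝ) - 1) * δ ≤ (2 * s k) * δ := by
        calc ((n:ℝ) - 1) * δ ≤ (c (n-1) : ℝ) - c 0 := h4
          _ ≤ 2 * s k * δ := hspan
      have h7 := (mul_le_mul_iff_of_pos_right hδ).mp h6
      linarith
  -- ================= case p = 1 =================
  · intro k hk hkp n c hc δ hδ hyp hspan
    have hk1q : k + 1 ≤ q := by omega
    have hs1p : (0:ℝ) < s (k+1) := s_pos hsl (by omega) hk1q
    have hL : (0:ℝ) < Real.log (s (k+1)) := Real.log_pos (by
      have := s_big hsl (j := k+1) (by omega) hk1q; linarith)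
    have hLn : (0:ℝ) ≤ Real.log (2 * s k) := Real.log_nonneg (by
      have := hsl k (by omega) (by omega)
      have h10 : (1:ℝ) ≤ 10^6 := by norm_num
      linarith)
    have hg : g s 1 k = 2 * Real.log (2 * s k) / Real.log (s (k+1)) + 5 := by
      simp [g]
    rw [hg]
    by_cases hn5 : n ≤ 5
    · have h1 : (n:ℝ) ≤ 5 := by exact_mod_cast hn5
      have h2 := div_nonneg (by linarith : (0:ℝ) ≤ 2 * Real.log (2 * s k)) hL.le
      linarith
    · have hn6 : 6 ≤ n := by omega
      have hcle : ∀ i j, i ≤ j → j < n → (c i : ℝ) ≤ (c j : ℝ) := by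
        intro i j hij hj
        rcases eq_or_lt_of_le hij with rfl|h
        · exact le_rfl
        · exact_mod_cast (hc i j h hj).le
      set T := n/2 - 2 with hT
      have hstep : ∀ j, 2*j + 4 ≤ n →
          δ + s (k+1) * ((c (n-2-j):ℝ) - c (j+1)) ≤ (c (n-1-j):ℝ) - c j := by
        intro j hj
        have hch : Chain n 1 (fun i => j + i) (fun i => n - 1 - j - i) := by
          refine ⟨?_, ?_, ?_, ?_⟩
          · intro i hi
            show j + i < j + (i+1)
            omega
          · show j + 1 < n - 1 - j - 1
            omega
          · intro i hi
            show n - 1 - j - (i+1) < n - 1 - j - i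
            omega
          · show n - 1 - j - 0 < n
            omega
        have h2 := hyp _ _ hch
        have h3 : S s k 1 c (fun i => j+i) (fun i => n-1-j-i) =
            ((c (n-1-j):ℝ) - c j) - s (k+1) * ((c (n-2-j):ℝ) - c (j+1)) := by
          simp only [S, Finset.sum_range_succ, Finset.sum_range_zero, w_zero, w_one,
            Nat.sub_zero, Nat.add_zero]
          rw [show n-1-j-1 = n-2-j from by omega]
          ring
        rw [h3] at h2
        linarith
      have hind : ∀ l, l ≤ T → (s (k+1))^l * δ ≤ (c (n-1-(T-l)):ℝ) - c (T-l) := by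
        intro l
        induction l with
        | zero =>
            intro _
            have h1 := hstep T (by omega)
            have h2 : (0:ℝ) ≤ (c (n-2-T):ℝ) - c (T+1) := by
              have := hcle (T+1) (n-2-T) (by omega) (by omega)
              linarith
            have h3 : (0:ℝ) ≤ s (k+1) * ((c (n-2-T):ℝ) - c (T+1)) := mul_nonneg hs1p.le h2
            rw [Nat.sub_zero, pow_zero, one_mul]
            linarith
        | succ l ih =>
            intro hl
            have h1 := ih (by omega)
            have h2 := hstep (T-(l+1)) (by omega)
            have e1 : T - (l+1) + 1 = T - l := by omega
            have e2 : n - 2 - (T-(l+1)) = n - 1 - (T-l) := by omega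
            rw [e1, e2] at h2
            have h3 : s (k+1) * ((s (k+1))^l * δ) ≤ s (k+1) * ((c (n-1-(T-l)):ℝ) - c (T-l)) :=
              mul_le_mul_of_nonneg_left h1 hs1p.le
            rw [pow_succ]
            calc (s (k+1))^l * s (k+1) * δ = s (k+1) * ((s (k+1))^l * δ) := by ring
              _ ≤ s (k+1) * ((c (n-1-(T-l)):ℝ) - c (T-l)) := h3
              _ ≤ (c (n-1-(T-(l+1))):ℝ) - c (T-(l+1)) := by linarith
      have h4 := hind T le_rfl
      rw [Nat.sub_self] at h4
      have h5 : (s (k+1))^T * δ ≤ (2 * s k) * δ := by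
        calc (s (k+1))^T * δ ≤ (c (n-1-0):ℝ) - c 0 := h4
          _ ≤ 2 * s k * δ := hspan
      have h6 := (mul_le_mul_iff_of_pos_right hδ).mp h5
      have h7 : Real.log ((s (k+1))^T) ≤ Real.log (2 * s k) := Real.log_le_log (by positivity) h6
      rw [Real.log_pow] at h7
      have h8 : (T:ℝ) ≤ Real.log (2 * s k) / Real.log (s (k+1)) := by
        rw [le_div_iff₀ hL]
        exact h7
      have h9 : (n:ℝ) ≤ 2*(T:ℝ) + 5 := by
        have : n ≤ 2*T + 5 := by omega
        exact_mod_cast this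
      have h8' : 2*(T:ℝ) ≤ 2 * Real.log (2 * s k) / Real.log (s (k+1)) := by
        rw [mul_div_assoc]
        linarith
      linarith
  -- ================= case p+2 =================
  · intro k hk hkp n c hc δ hδ hyp hspan
    have hk1 : k + 1 ≤ q := by omega
    have hk2 : k + 2 ≤ q := by omega
    have hs1p : (0:ℝ) < s (k+1) := s_pos hsl (by omega) hk1
    have hs2p : (0:ℝ) < s (k+2) := s_pos hsl (by omega) hk2
    have hprod : (0:ℝ) < s (k+1) * s (k+2) := mul_pos hs1p hs2p
    classical
    have hE : ∃ j, (n < 2*j + 6 ∨ Rf c n j ≤ δ ∨ 2 * Rf c n j < s (k+1) * Rf c n (j+1)) :=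
      ⟨n, Or.inl (by omega)⟩
    set J := Nat.find hE with hJdef
    have hEJ := Nat.find_spec hE
    rw [← hJdef] at hEJ
    have hnE : ∀ j, j < J → ¬(n < 2*j + 6 ∨ Rf c n j ≤ δ ∨ 2 * Rf c n j < s (k+1) * Rf c n (j+1)) :=
      fun j hj => Nat.find_min hE hj
    have hRup : ∀ j, j < J → Rf c n j ≤ (2 / s (k+1))^j * Rf c n 0 := by
      intro j
      induction j with
      | zero => intro _; simp
      | succ j ih =>
          intro hj
          have h1 := hnE j (by omega)
          push_neg at h1
          obtain ⟨-, -, h3⟩ := h1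
          have h4 := ih (by omega)
          have h5 : Rf c n (j+1) ≤ (2 / s (k+1)) * Rf c n j := by
            rw [div_mul_eq_mul_div, le_div_iff₀ hs1p]
            nlinarith
          calc Rf c n (j+1) ≤ (2 / s (k+1)) * Rf c n j := h5
            _ ≤ (2 / s (k+1)) * ((2 / s (k+1))^j * Rf c n 0) := by
                apply mul_le_mul_of_nonneg_left h4 (by positivity)
            _ = (2 / s (k+1))^(j+1) * Rf c n 0 := by ring
    have hlogs2 : (0:ℝ) < Real.log (s (k+1)/2) := Real.log_pos (by
      have := s_big hsl (j := k+1) (by omega) hk1; linarith)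
    have hlog2sk : (0:ℝ) ≤ Real.log (2 * s k) := Real.log_nonneg (by
      have := hsl k (by omega) (by omega)
      have h10 : (1:ℝ) ≤ 10^6 := by norm_num
      linarith)
    set Lam := Real.log (2 * s k) / Real.log (s (k+1)/2) with hLam
    have hLam0 : (0:ℝ) ≤ Lam := div_nonneg hlog2sk hlogs2.le
    have hR0span : Rf c n 0 ≤ 2 * s k * δ := by
      have h0 : Rf c n 0 = (c (n-1):ℝ) - c 0 := by simp only [Rf, Nat.sub_zero]
      rw [h0]; exact hspan
    have hJle : (J:ℝ) ≤ Lam + 1 := by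
      rcases Nat.eq_zero_or_pos J with h0|hJ1
      · rw [h0]; push_cast; linarith
      · have hm := hnE (J-1) (by omega)
        push_neg at hm
        obtain ⟨hm1, hm2, -⟩ := hm
        have h4 := hRup (J-1) (by omega)
        have hpw : (0:ℝ) ≤ (2 / s (k+1))^(J-1) := by positivity
        have h5 : δ < (2 / s (k+1))^(J-1) * (2 * s k * δ) :=
          lt_of_lt_of_le hm2 (le_trans h4 (mul_le_mul_of_nonneg_left hR0span hpw))
        have hpowpos : (0:ℝ) < (s (k+1)/2)^(J-1) := by positivity
        have hinv : ((s (k+1)/2)^(J-1)) * ((2 / s (k+1))^(J-1)) = 1 := by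
          rw [← mul_pow]
          rw [show (s (k+1)/2) * (2 / s (k+1)) = 1 from by field_simp]
          exact one_pow _
        have h6a : (s (k+1)/2)^(J-1) * δ
            < (s (k+1)/2)^(J-1) * ((2 / s (k+1))^(J-1) * (2 * s k * δ)) :=
          mul_lt_mul_of_pos_left h5 hpowpos
        rw [← mul_assoc, hinv, one_mul] at h6a
        have h6 : (s (k+1)/2)^(J-1) < 2 * s k := by
          have := (mul_lt_mul_iff_of_pos_right hδ).mp h6a
          linarith
        have h7 : Real.log ((s (k+1)/2)^(J-1)) ≤ Real.log (2 * s k) :=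
          Real.log_le_log hpowpos h6.le
        rw [Real.log_pow] at h7
        have h8 : ((J-1:ℕ):ℝ) ≤ Lam := by
          rw [hLam, le_div_iff₀ hlogs2]
          exact h7
        have h9 : ((J-1:ℕ):ℝ) = (J:ℝ) - 1 := by
          rw [Nat.cast_sub hJ1]; simp
        linarith
    rw [g_rec]
    have hg1 : (1:ℝ) ≤ g s p (k+2) := g_ge_one hsl p (k+2) (by omega) (by omega)
    by_cases hn : n < 2*J + 6
    · have hnR : (n:ℝ) ≤ 2*(J:ℝ) + 5 := by
        have : n ≤ 2*J + 5 := by omega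
        push_cast
        exact_mod_cast this
      have hphase : 2 * Real.log (2 * s k) / Real.log (s (k + 1)/2) = 2 * Lam := by
        rw [hLam]; ring
      rw [hphase]
      linarith
    · push_neg at hn
      have hRj1pos : (0:ℝ) < Rf c n (J+1) := by
        have h1 : c (J+1) < c (n-1-(J+1)) := hc (J+1) (n-1-(J+1)) (by omega) (by omega)
        have h2 : ((c (J+1)):ℝ) < c (n-1-(J+1)) := by exact_mod_cast h1
        simp only [Rf]
        linarith
      have hRmono : Rf c n (J+2) ≤ Rf c n (J+1) := by
        have h1 : (c (J+1):ℝ) ≤ c (J+2) := by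
          have := hc (J+1) (J+2) (by omega) (by omega)
          exact_mod_cast this.le
        have h2 : (c (n-1-(J+2)):ℝ) ≤ c (n-1-(J+1)) := by
          have := hc (n-1-(J+2)) (n-1-(J+1)) (by omega) (by omega)
          exact_mod_cast this.le
        simp only [Rf]
        linarith
      set δ'' := (δ - Rf c n J + s (k+1) * Rf c n (J+1)) / (s (k+1) * s (k+2)) with hδ''
      have hcase : Rf c n J ≤ δ ∨ 2 * Rf c n J < s (k+1) * Rf c n (J+1) := by
        rcases hEJ with h|h|h
        · omega
        · exact Or.inl h
        · exact Or.inr h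
      have hnum : s (k+1) * Rf c n (J+1) / 2 ≤ δ - Rf c n J + s (k+1) * Rf c n (J+1) := by
        rcases hcase with h|h
        · nlinarith
        · nlinarith
      have hnumpos : (0:ℝ) < δ - Rf c n J + s (k+1) * Rf c n (J+1) := by
        have : (0:ℝ) < s (k+1) * Rf c n (J+1) / 2 := by positivity
        linarith
      have hδ''pos : 0 < δ'' := div_pos hnumpos hprod
      have hyp' : ∀ a b, Chain (n - 2*J - 4) p a b
          → δ'' ≤ S s (k+2) p (fun i => c (i + (J+2))) a b := by
        intro a b hab
        obtain ⟨ha, hab1, hb, hb0⟩ := hab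
        have hch : Chain n (p+2) (compA J a) (compB J n b) := by
          refine ⟨?_, ?_, ?_, ?_⟩
          · intro i hi
            match i with
            | 0 => show J < J+1; omega
            | 1 => show J+1 < a 0 + (J+2); omega
            | (i+2) =>
                show a i + (J+2) < a (i+1) + (J+2)
                have := ha i (by omega)
                omega
          · show a p + (J+2) < b p + (J+2)
            omega
          · intro i hi
            match i with
            | 0 => show n-2-J < n-1-J; omega
            | 1 => show b 0 + (J+2) < n-2-J; omega
            | (i+2) =>
                show b (i+1) + (J+2) < b i + (J+2)
                have := hb i (by omega)
                omega
          · show n-1-J < n; omega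
        have h1 := hyp _ _ hch
        rw [comp_sum] at h1
        have hRJ : Rf c n J = (c (n-1-J):ℝ) - c J := by simp only [Rf]
        have hRJ1 : Rf c n (J+1) = (c (n-2-J):ℝ) - c (J+1) := by
          simp only [Rf]
          rw [show n-1-(J+1) = n-2-J from by omega]
        rw [hδ'', div_le_iff₀ hprod]
        rw [hRJ, hRJ1]
        linarith
      have hspan' : ((fun i => c (i + (J+2))) ((n - 2*J - 4) - 1) : ℝ)
          - (fun i => c (i + (J+2))) 0 ≤ 2 * s (k+2) * δ'' := by
        simp only []
        rw [show (n - 2*J - 4) - 1 + (J+2) = n-1-(J+2) from by omega,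
            show 0 + (J+2) = J+2 from by omega]
        have h1 : (c (n-1-(J+2)):ℝ) - c (J+2) = Rf c n (J+2) := by simp only [Rf]
        rw [h1, hδ'']
        rw [show 2 * s (k+2) * ((δ - Rf c n J + s (k+1) * Rf c n (J+1)) / (s (k+1) * s (k+2)))
            = 2 * (δ - Rf c n J + s (k+1) * Rf c n (J+1)) / s (k+1) from by field_simp]
        rw [le_div_iff₀ hs1p]
        nlinarith [hnum, hRmono, hs1p, hRj1pos]
      have hc'mono : ∀ i j, i < j → j < n - 2*J - 4
          → (fun i => c (i + (J+2))) i < (fun i => c (i + (J+2))) j := by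
        intro i j hij hj
        exact hc _ _ (by omega) (by omega)
      have hIH := IH p (by omega) (k+2) (by omega) (by omega) (n - 2*J - 4)
        (fun i => c (i + (J+2))) hc'mono δ'' hδ''pos hyp' hspan'
      have hcast : (n:ℝ) = ((n - 2*J - 4 : ℕ):ℝ) + 2*(J:ℝ) + 4 := by
        have h1 : n - 2*J - 4 = n - (2*J+4) := by omega
        rw [h1, Nat.cast_sub (by omega : 2*J+4 ≤ n)]
        push_cast
        ring
      have hphase : 2 * Real.log (2 * s k) / Real.log (s (k + 1)/2) = 2 * Lam := by
        rw [hLam]; ring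
      rw [hphase, hcast]
      linarith


lemma chains_nonpos {q n : ℕ} {s : ℕ → ℝ} {c : ℕ → ℕ} {C : Finset ℕ}
    (hc : ∀ i j, i < j → j < n → c i < c j) (hcm : ∀ i, i < n → c i ∈ C)
    (hindep : ∀ a : ℕ → ℕ,
      (∀ i j, i < j → j < 2 * q + 2 → a i < a j) →
      (∀ i, i < 2 * q + 2 → a i ∈ C) →
      ¬ (0 < ∑ i ∈ Finset.range (q + 1),
        (-1 : ℝ) ^ i * (∏ j ∈ Finset.Icc 1 i, s j) *
          ((a (2 * q + 1 - i) : ℝ) - (a i : ℝ)))) :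
    ∀ X Y, Chain n q X Y → S s 0 q c X Y ≤ 0 := by
  intro X Y hXY
  obtain ⟨hXi, hXY1, hYi, hY0⟩ := hXY
  have hXlt : ∀ i, i ≤ q → X i < n := by
    intro i hi
    have h1 : X i ≤ X q := mono_of_step hXi q le_rfl i hi
    have h2 : Y q ≤ Y 0 := anti_of_step hYi q le_rfl 0 (by omega)
    omega
  have hYlt : ∀ i, i ≤ q → Y i < n := by
    intro i hi
    have h2 : Y i ≤ Y 0 := anti_of_step hYi i hi 0 (by omega)
    omega
  have hXY' : ∀ i j, i ≤ q → j ≤ q → X i < Y j := by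
    intro i j hi hj
    have h1 : X i ≤ X q := mono_of_step hXi q le_rfl i hi
    have h2 : Y q ≤ Y j := anti_of_step hYi q le_rfl j hj
    omega
  set af : ℕ → ℕ := fun j => if j ≤ q then c (X j) else c (Y (2*q+1-j)) with haf
  have hmono : ∀ i j, i < j → j < 2*q+2 → af i < af j := by
    intro i j hij hj
    by_cases hi' : i ≤ q
    · by_cases hj' : j ≤ q
      · simp only [haf]
        rw [if_pos hi', if_pos hj']
        exact hc _ _ (smono_of_step hXi i j hij hj') (hXlt j hj')
      · simp only [haf]
        rw [if_pos hi', if_neg hj']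
        exact hc _ _ (hXY' i (2*q+1-j) hi' (by omega)) (hYlt _ (by omega))
    · have hj' : ¬ j ≤ q := by omega
      simp only [haf]
      rw [if_neg hi', if_neg hj']
      exact hc _ _ (santi_of_step hYi (2*q+1-j) (2*q+1-i) (by omega) (by omega))
        (hYlt _ (by omega))
  have hmem : ∀ i, i < 2*q+2 → af i ∈ C := by
    intro i hi
    by_cases hi' : i ≤ q
    · simp only [haf]; rw [if_pos hi']; exact hcm _ (hXlt i hi')
    · simp only [haf]; rw [if_neg hi']; exact hcm _ (hYlt _ (by omega))
  have h0 := hindep af hmono hmem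
  rw [not_lt] at h0
  have hSeq : (∑ i ∈ Finset.range (q+1),
      (-1:ℝ)^i * (∏ j ∈ Finset.Icc 1 i, s j) * ((af (2*q+1-i):ℝ) - (af i : ℝ)))
      = S s 0 q c X Y := by
    unfold S
    refine Finset.sum_congr rfl fun i hi => ?_
    have hi' : i ≤ q := by have := Finset.mem_range.mp hi; omega
    rw [w_Icc]
    have e1 : af i = c (X i) := by simp only [haf]; rw [if_pos hi']
    have e2 : af (2*q+1-i) = c (Y i) := by
      simp only [haf]
      rw [if_neg (by omega)]
      rw [show 2*q+1-(2*q+1-i) = i from by omega]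
    rw [e1, e2]
  rw [← hSeq]
  exact h0

lemma final_bound {q : ℕ} {s : ℕ → ℝ} (hq : 1 ≤ q)
    (hs : ∀ i j, 1 ≤ i → i < j → j ≤ q → s j < s i) (hsq : (10:ℝ)^6 ≤ s q) :
    2 + g s (q-1) 1 ≤ 10 * (s q + 2 +
      ∑ i ∈ Finset.Icc 1 (q / 2), Real.log (s (2 * i - 1)) / Real.log (s (2 * i))) := by
  have hsl : ∀ j, 1 ≤ j → j ≤ q → (10:ℝ)^6 ≤ s j := by
    intro j h1 h2
    rcases eq_or_lt_of_le h2 with rfl|h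
    · exact hsq
    · exact hsq.trans (hs j q h1 h le_rfl).le
  have hsqpos : (0:ℝ) < s q := s_pos hsl hq le_rfl
  have key : ∀ i, i < q/2 →
      (2 * Real.log (2 * s (1 + 2*i)) / Real.log (s (1 + 2*i + 1)/2) + 6)
      ≤ 10 * (Real.log (s (2*(i+1) - 1)) / Real.log (s (2*(i+1)))) := by
    intro i hi
    have h := phase_bound hsl (a := 1+2*i) (by omega) (by omega)
      (hs (1+2*i) (1+2*i+1) (by omega) (by omega) (by omega))
    rw [show 2*(i+1)-1 = 1+2*i from by omega, show 2*(i+1) = 1+2*i+1 from by omega]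
    exact h
  have hρ : ∀ i, 1 ≤ i → 2*i ≤ q → 0 ≤ Real.log (s (2*i-1)) / Real.log (s (2*i)) := by
    intro i h1 h2
    apply div_nonneg
    · apply Real.log_nonneg
      have := hsl (2*i-1) (by omega) (by omega)
      have h10 : (1:ℝ) ≤ 10^6 := by norm_num
      linarith
    · apply Real.log_nonneg
      have := hsl (2*i) (by omega) (by omega)
      have h10 : (1:ℝ) ≤ 10^6 := by norm_num
      linarith
  by_cases hpar : q % 2 = 1
  · -- q odd
    have hq2 : (q-1)/2 = q/2 := by omega
    have hg : g s (q-1) 1 = (∑ i ∈ Finset.range (q/2),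
        (2 * Real.log (2 * s (1 + 2*i)) / Real.log (s (1 + 2*i + 1)/2) + 6))
        + (2 * s (1 + (q-1)) + 1) := by
      unfold g
      rw [hq2, if_pos (by omega : (q-1) % 2 = 0)]
    rw [hg, show 1 + (q-1) = q from by omega]
    have hsum : (∑ i ∈ Finset.range (q/2),
        (2 * Real.log (2 * s (1 + 2*i)) / Real.log (s (1 + 2*i + 1)/2) + 6))
        ≤ ∑ i ∈ Finset.range (q/2),
          10 * (Real.log (s (2*(i+1) - 1)) / Real.log (s (2*(i+1)))) :=
      Finset.sum_le_sum (fun i hi => key i (Finset.mem_range.mp hi))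
    have hshift : (∑ i ∈ Finset.range (q/2),
        10 * (Real.log (s (2*(i+1) - 1)) / Real.log (s (2*(i+1)))))
        = ∑ i ∈ Finset.Icc 1 (q/2), 10 * (Real.log (s (2*i - 1)) / Real.log (s (2*i))) :=
      sum_shift (fun i => 10 * (Real.log (s (2*i - 1)) / Real.log (s (2*i)))) (q/2)
    rw [hshift] at hsum
    have hfact : (∑ i ∈ Finset.Icc 1 (q/2), 10 * (Real.log (s (2*i - 1)) / Real.log (s (2*i))))
        = 10 * ∑ i ∈ Finset.Icc 1 (q/2), Real.log (s (2*i - 1)) / Real.log (s (2*i)) := by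
      rw [Finset.mul_sum]
    rw [hfact] at hsum
    linarith
  · -- q even
    have hq2' : 2 ≤ q := by omega
    have hl1 : 1 ≤ q/2 := by omega
    have hg : g s (q-1) 1 = (∑ i ∈ Finset.range ((q-1)/2),
        (2 * Real.log (2 * s (1 + 2*i)) / Real.log (s (1 + 2*i + 1)/2) + 6))
        + (2 * Real.log (2 * s (1 + (q-1) - 1)) / Real.log (s (1 + (q-1))) + 5) := by
      unfold g
      rw [if_neg (by omega : ¬ (q-1) % 2 = 0)]
    rw [hg, show 1 + (q-1) - 1 = q - 1 from by omega, show 1 + (q-1) = q from by omega]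
    have hterm : 2 * Real.log (2 * s (q-1)) / Real.log (s q) + 5
        ≤ 10 * (Real.log (s (2*(q/2) - 1)) / Real.log (s (2*(q/2)))) := by
      rw [show 2*(q/2) = q from by omega]
      have h := term_bound hsl (a := q-1) (by omega) (by omega)
        (hs (q-1) (q-1+1) (by omega) (by omega) (by omega))
      rw [show q-1+1 = q from by omega] at h
      exact h
    have hq12 : (q-1)/2 = q/2 - 1 := by omega
    rw [hq12]
    have hsum : (∑ i ∈ Finset.range (q/2 - 1),
        (2 * Real.log (2 * s (1 + 2*i)) / Real.log (s (1 + 2*i + 1)/2) + 6))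
        ≤ ∑ i ∈ Finset.range (q/2 - 1),
          10 * (Real.log (s (2*(i+1) - 1)) / Real.log (s (2*(i+1)))) :=
      Finset.sum_le_sum (fun i hi => key i (by have := Finset.mem_range.mp hi; omega))
    have hshift : (∑ i ∈ Finset.range (q/2 - 1),
        10 * (Real.log (s (2*(i+1) - 1)) / Real.log (s (2*(i+1)))))
        = ∑ i ∈ Finset.Icc 1 (q/2 - 1), 10 * (Real.log (s (2*i - 1)) / Real.log (s (2*i))) :=
      sum_shift (fun i => 10 * (Real.log (s (2*i - 1)) / Real.log (s (2*i)))) (q/2 - 1)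
    rw [hshift] at hsum
    have hsplit : (∑ i ∈ Finset.Icc 1 (q/2), 10 * (Real.log (s (2*i - 1)) / Real.log (s (2*i))))
        = (∑ i ∈ Finset.Icc 1 (q/2 - 1), 10 * (Real.log (s (2*i - 1)) / Real.log (s (2*i))))
          + 10 * (Real.log (s (2*(q/2) - 1)) / Real.log (s (2*(q/2)))) := by
      rw [show q/2 = (q/2 - 1) + 1 from by omega]
      rw [Finset.sum_Icc_succ_top (by omega)]
      rw [show (q/2 - 1) + 1 = q/2 from by omega]
    have hfact : (∑ i ∈ Finset.Icc 1 (q/2), 10 * (Real.log (s (2*i - 1)) / Real.log (s (2*i))))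
        = 10 * ∑ i ∈ Finset.Icc 1 (q/2), Real.log (s (2*i - 1)) / Real.log (s (2*i)) := by
      rw [Finset.mul_sum]
    linarith [hsplit, hfact, hsum, hterm, hsqpos]


end IndepBound

open Finset in
/-- Let `r = 2q+2` with `q ≥ 1` and `s 1 > ⋯ > s q ≥ 10^6`. With `t i = s 1 ⋯ s i`
(`t 0 = 1`), let `H` be the `r`-uniform hypergraph on `[N]` (`N > s 1`) in which an
increasing `r`-tuple `(x₀,…,x_q,y_q,…,y₀)` is an edge iff
`Σ_{i=0}^q (-1)^i t i (y i - x i) > 0`. Then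
`α(H) ≤ 10 (s q + 2 + Σ_{i=1}^{⌊q/2⌋} log (s (2i-1)) / log (s (2i)))`. -/
theorem indepNumber_bound (q N : ℕ) (hq : 1 ≤ q) (s : ℕ → ℝ)
    (hs : ∀ i j, 1 ≤ i → i < j → j ≤ q → s j < s i) (hsq : (10 : ℝ) ^ 6 ≤ s q)
    (hN : s 1 < N)
    (C : Finset ℕ) (hC : C ⊆ Finset.Icc 1 N)
    (hindep : ∀ a : ℕ → ℕ,
      (∀ i j, i < j → j < 2 * q + 2 → a i < a j) →
      (∀ i, i < 2 * q + 2 → a i ∈ C) →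
      ¬ (0 < ∑ i ∈ Finset.range (q + 1),
        (-1 : ℝ) ^ i * (∏ j ∈ Finset.Icc 1 i, s j) *
          ((a (2 * q + 1 - i) : ℝ) - (a i : ℝ)))) :
    (C.card : ℝ) ≤ 10 * (s q + 2 +
      ∑ i ∈ Finset.Icc 1 (q / 2), Real.log (s (2 * i - 1)) / Real.log (s (2 * i))) := by
  classical
  obtain ⟨qm, rfl⟩ : ∃ qm, q = qm + 1 := ⟨q - 1, by omega⟩
  have hsl : ∀ j, 1 ≤ j → j ≤ qm+1 → (10:ℝ)^6 ≤ s j := by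
    intro j h1 h2
    rcases eq_or_lt_of_le h2 with rfl|h
    · exact hsq
    · exact hsq.trans (hs j (qm+1) h1 h le_rfl).le
  have hSig : 0 ≤ ∑ i ∈ Finset.Icc 1 ((qm+1)/2), Real.log (s (2*i-1)) / Real.log (s (2*i)) := by
    apply Finset.sum_nonneg
    intro i hi
    have hi' := Finset.mem_Icc.mp hi
    have h10 : (1:ℝ) ≤ 10^6 := by norm_num
    apply div_nonneg
    · apply Real.log_nonneg
      have := hsl (2*i-1) (by omega) (by omega)
      linarith
    · apply Real.log_nonneg
      have := hsl (2*i) (by omega) (by omega)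
      linarith
  have hsqpos : (0:ℝ) < s (qm+1) := lt_of_lt_of_le (by norm_num) hsq
  by_cases hn1 : C.card ≤ 1
  · have h1 : (C.card:ℝ) ≤ 1 := by exact_mod_cast hn1
    linarith
  · push_neg at hn1
    set n := C.card with hn
    have hn2 : 2 ≤ n := hn1
    have hcard : C.card = n := hn.symm
    set e := C.orderEmbOfFin hcard with hedef
    set c : ℕ → ℕ := fun i => if h : i < n then e ⟨i, h⟩ else 0 with hcdef
    have hc : ∀ i j, i < j → j < n → c i < c j := by
      intro i j hij hj
      have hi : i < n := by omega
      simp only [hcdef]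
      rw [dif_pos hi, dif_pos hj]
      exact e.strictMono (Fin.mk_lt_mk.mpr hij)
    have hcm : ∀ i, i < n → c i ∈ C := by
      intro i hi
      simp only [hcdef]
      rw [dif_pos hi]
      exact Finset.orderEmbOfFin_mem C hcard ⟨i, hi⟩
    have hcle : ∀ i j, i ≤ j → j < n → (c i : ℝ) ≤ (c j : ℝ) := by
      intro i j hij hj
      rcases eq_or_lt_of_le hij with rfl|h
      · exact le_rfl
      · exact_mod_cast (hc i j h hj).le
    have hyp0 := IndepBound.chains_nonpos (q := qm+1) (s := s) hc hcm hindep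
    have hD : (0:ℝ) < (c (n-1) : ℝ) - c 0 := by
      have h0 := hc 0 (n-1) (by omega) (by omega)
      have h' : ((c 0:ℕ):ℝ) < c (n-1) := by exact_mod_cast h0
      linarith
    have hs1pos : (0:ℝ) < s 1 := lt_of_lt_of_le (by norm_num) (hsl 1 le_rfl (by omega))
    set D := (c (n-1) : ℝ) - c 0 with hDdef
    set δ := D / s 1 with hδdef
    have hδpos : 0 < δ := div_pos hD hs1pos
    have hyp1 : ∀ a b, IndepBound.Chain (n-2) qm a b
        → δ ≤ IndepBound.S s 1 qm (fun i => c (i+1)) a b := by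
      intro a b hab
      obtain ⟨ha, hab1, hb, hb0⟩ := hab
      have hch : IndepBound.Chain n (qm+1) (IndepBound.peelA a) (IndepBound.peelB n b) := by
        refine ⟨?_, ?_, ?_, ?_⟩
        · intro i hi
          match i with
          | 0 => show 0 < a 0 + 1; omega
          | (i+1) =>
              show a i + 1 < a (i+1) + 1
              have := ha i (by omega)
              omega
        · show a qm + 1 < b qm + 1
          omega
        · intro i hi
          match i with
          | 0 => show b 0 + 1 < n - 1; omega
          | (i+1) =>
              show b (i+1) + 1 < b i + 1
              have := hb i (by omega)
              omega
        · show n - 1 < n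
          omega
      have h1 := hyp0 _ _ hch
      rw [IndepBound.peel_sum] at h1
      rw [← hDdef] at h1
      rw [hδdef, div_le_iff₀ hs1pos]
      linarith
    have hspan1 : ((fun i => c (i+1)) ((n-2)-1) : ℝ) - ((fun i => c (i+1)) 0 : ℕ) ≤ 2 * s 1 * δ := by
      simp only []
      have h1 : (c ((n-2)-1+1):ℝ) ≤ c (n-1) := hcle _ _ (by omega) (by omega)
      have h2 : (c 0:ℝ) ≤ c (0+1) := hcle _ _ (by omega) (by omega)
      have h3 : 2 * s 1 * δ = 2 * D := by
        rw [hδdef]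
        field_simp
        try ring
      rw [h3, hDdef]
      linarith
    have hclaim := IndepBound.claim hsl qm 1 le_rfl (by omega) (n-2) (fun i => c (i+1))
      (fun i j hij hj => hc (i+1) (j+1) (by omega) (by omega)) δ hδpos hyp1 hspan1
    have hfin' : 2 + IndepBound.g s qm 1 ≤ 10 * (s (qm+1) + 2 +
        ∑ i ∈ Finset.Icc 1 ((qm+1) / 2), Real.log (s (2*i-1)) / Real.log (s (2*i))) :=
      IndepBound.final_bound hq hs hsq
    have hcast : ((n-2:ℕ):ℝ) = (n:ℝ) - 2 := by
      rw [Nat.cast_sub (by omega)]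
      norm_num
    rw [hcast] at hclaim
    linarith
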